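/- arXiv:2505.22652 — 2 statements merged into one kernel-verified Lean document; each statement's English description precedes it below -/
import Mathlib

section
/- If G is a connected graph that admits a NAC-coloring, then so does any graph obtained from G by subdividing an edge (replacing an edge by a path of length 2 through a new vertex). -/
/-- `c` is a NAC-coloring of `G`: an edge 2-coloring (here `true` = red,
`false` = blue) such that both colors occur on edges of `G` and every cycle of `G`
is either monochromatic or contains at least two edges of each color. -/
def IsNACColoring {V : Type*} (G : SimpleGraph V) (c : Sym2 V → Bool) : Prop :=
  (∃ e ∈ G.edgeSet, c e = true) ∧ (∃ e ∈ G.edgeSet, c e = false) ∧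
  ∀ ⦃v : V⦄ (w : G.Walk v v), w.IsCycle →
    (∀ e ∈ w.edges, c e = true) ∨ (∀ e ∈ w.edges, c e = false) ∨
    (2 ≤ (w.edges.filter (fun e => c e = true)).length ∧
     2 ≤ (w.edges.filter (fun e => c e = false)).length)

/-- The graph obtained from `G` by subdividing the edge `{a, b}`: the edge is
removed and replaced by a path of length 2 through a new vertex (`none`). -/
def subdivideEdge {V : Type*} (G : SimpleGraph V) (a b : V) :
    SimpleGraph (Option V) :=
  SimpleGraph.fromRel (fun x y =>
    (∃ u v, x = some u ∧ y = some v ∧ G.Adj u v ∧ s(u, v) ≠ s(a, b)) ∨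
    (x = none ∧ (y = some a ∨ y = some b)))

private lemma subAdj_cases {V : Type*} {G : SimpleGraph V} {a b : V} {x y : Option V}
    (h : (subdivideEdge G a b).Adj x y) :
    (∃ u v, x = some u ∧ y = some v ∧ G.Adj u v ∧ s(u, v) ≠ s(a, b)) ∨
    (x = none ∧ (y = some a ∨ y = some b)) ∨
    (y = none ∧ (x = some a ∨ x = some b)) := by
  rw [subdivideEdge, SimpleGraph.fromRel_adj] at h
  obtain ⟨-, h | h⟩ := h
  · rcases h with ⟨u, v, rfl, rfl, hadj, hne⟩ | h
    · exact Or.inl ⟨u, v, rfl, rfl, hadj, hne⟩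
    · exact Or.inr (Or.inl h)
  · rcases h with ⟨u, v, rfl, rfl, hadj, hne⟩ | h
    · exact Or.inl ⟨v, u, rfl, rfl, hadj.symm, by rw [Sym2.eq_swap]; exact hne⟩
    · exact Or.inr (Or.inr ⟨h.1, h.2⟩)

private lemma lift_walk {V : Type*} {G : SimpleGraph V} {a b : V} {x y : Option V}
    (w : (subdivideEdge G a b).Walk x y) (hw : none ∉ w.support) :
    ∃ (x' y' : V) (w' : G.Walk x' y'), x = some x' ∧ y = some y' ∧
      w.support = w'.support.map some ∧
      w.edges = w'.edges.map (Sym2.map some) ∧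
      ∀ e ∈ w'.edges, e ≠ s(a, b) := by
  induction w with
  | nil =>
    rename_i x
    simp only [SimpleGraph.Walk.support_nil, List.mem_singleton] at hw
    obtain ⟨x', rfl⟩ := Option.ne_none_iff_exists'.mp (fun h => hw h.symm)
    exact ⟨x', x', SimpleGraph.Walk.nil, rfl, rfl, by simp, by simp, by simp⟩
  | cons h p ih =>
    rw [SimpleGraph.Walk.support_cons, List.mem_cons] at hw
    push_neg at hw
    obtain ⟨hw0, hw1⟩ := hw
    obtain ⟨u', v', w', hy, hv, hs, he, hne⟩ := ih hw1
    rcases subAdj_cases h with ⟨u, v, rfl, hyv, hadj, hne2⟩ | ⟨rfl, -⟩ | ⟨hyn, -⟩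
    · subst hy
      obtain rfl : u' = v := Option.some_inj.mp hyv
      refine ⟨u, v', SimpleGraph.Walk.cons hadj w', rfl, hv, ?_, ?_, ?_⟩
      · simp [SimpleGraph.Walk.support_cons, hs]
      · simp [SimpleGraph.Walk.edges_cons, he, Sym2.map_pair_eq]
      · intro e hee
        rw [SimpleGraph.Walk.edges_cons, List.mem_cons] at hee
        rcases hee with rfl | hee
        · exact hne2
        · exact hne e hee
    · exact absurd rfl hw0
    · subst hyn
      exact absurd p.start_mem_support hw1

private lemma lift_cycle {V : Type*} {G : SimpleGraph V} {a b : V} {x : Option V}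
    (w : (subdivideEdge G a b).Walk x x) (hw : w.IsCycle) (hn : none ∉ w.support) :
    ∃ (x' : V) (w' : G.Walk x' x'), w'.IsCycle ∧
      w.edges = w'.edges.map (Sym2.map some) := by
  obtain ⟨x', y', w', hx, hy, hs, he, -⟩ := lift_walk w hn
  subst hx
  obtain rfl : x' = y' := by injection hy
  refine ⟨x', w', ?_, he⟩
  rw [SimpleGraph.Walk.isCycle_def]
  refine ⟨⟨?_⟩, ?_, ?_⟩
  · have h1 := hw.edges_nodup
    rw [he] at h1
    exact h1.of_map _
  · intro h0
    have h3 := hw.three_le_length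
    have h4 : w.length = w'.length := by
      rw [← SimpleGraph.Walk.length_edges, he, List.length_map,
        SimpleGraph.Walk.length_edges]
    rw [h0] at h4
    simp only [SimpleGraph.Walk.length_nil] at h4
    omega
  · have h2 := hw.support_nodup
    rw [hs] at h2
    exact List.Nodup.of_map some (by rwa [← List.map_tail] at h2)

private lemma walk_decomp {V : Type*} {G : SimpleGraph V} {x y : V} (hxy : x ≠ y)
    (p : G.Walk x y) :
    ∃ (z : V) (h : G.Adj x z) (q : G.Walk z y), p = SimpleGraph.Walk.cons h q := by
  cases p with
  | nil => exact absurd rfl hxy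
  | cons h q => exact ⟨_, h, q, rfl⟩

/-- If a connected graph `G` admits a NAC-coloring, then so does any graph
obtained from `G` by subdividing an edge. -/
theorem nac_of_subdivision {V : Type*} (G : SimpleGraph V) (a b : V)
    (hab : G.Adj a b) (hconn : G.Connected)
    (hNAC : ∃ c : Sym2 V → Bool, IsNACColoring G c) :
    ∃ c' : Sym2 (Option V) → Bool, IsNACColoring (subdivideEdge G a b) c' := by
  classical
  obtain ⟨c, ⟨⟨et, het, hct⟩, ⟨ef, hef, hcf⟩, hcyc⟩⟩ := hNAC
  set c' : Sym2 (Option V) → Bool :=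
    fun e => if none ∈ e then c s(a, b) else c (e.map (fun o => o.getD a)) with hc'
  have hcmap : ∀ e : Sym2 V, c' (Sym2.map some e) = c e := by
    intro e
    induction e using Sym2.ind with
    | _ u v => simp [hc', Sym2.map_pair_eq, Sym2.mem_iff]
  have hcnone : ∀ x : Option V, c' s(none, x) = c s(a, b) := by
    intro x
    simp [hc', Sym2.mem_iff]
  have hGadj : ∀ {u v : V}, G.Adj u v → s(u, v) ≠ s(a, b) →
      (subdivideEdge G a b).Adj (some u) (some v) := by
    intro u v huv hne
    rw [subdivideEdge, SimpleGraph.fromRel_adj]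
    exact ⟨by simpa using huv.ne, Or.inl (Or.inl ⟨u, v, rfl, rfl, huv, hne⟩)⟩
  have hadj_na : (subdivideEdge G a b).Adj none (some a) := by
    rw [subdivideEdge, SimpleGraph.fromRel_adj]
    exact ⟨by simp, Or.inl (Or.inr ⟨rfl, Or.inl rfl⟩)⟩
  refine ⟨c', ?_, ?_, ?_⟩
  · induction et using Sym2.ind with
    | _ u v =>
      by_cases h : s(u, v) = s(a, b)
      · exact ⟨s(none, some a), ((subdivideEdge G a b).mem_edgeSet).mpr hadj_na,
          by rw [hcnone, ← h]; exact hct⟩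
      · refine ⟨s(some u, some v),
          ((subdivideEdge G a b).mem_edgeSet).mpr (hGadj (G.mem_edgeSet.mp het) h), ?_⟩
        rw [show s(some u, some v) = Sym2.map some s(u, v) from (Sym2.map_pair_eq _ _ _).symm,
          hcmap]
        exact hct
  · induction ef using Sym2.ind with
    | _ u v =>
      by_cases h : s(u, v) = s(a, b)
      · exact ⟨s(none, some a), ((subdivideEdge G a b).mem_edgeSet).mpr hadj_na,
          by rw [hcnone, ← h]; exact hcf⟩
      · refine ⟨s(some u, some v),
          ((subdivideEdge G a b).mem_edgeSet).mpr (hGadj (G.mem_edgeSet.mp hef) h), ?_⟩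
        rw [show s(some u, some v) = Sym2.map some s(u, v) from (Sym2.map_pair_eq _ _ _).symm,
          hcmap]
        exact hcf
  · intro v w hw
    by_cases hn : (none : Option V) ∈ w.support
    swap
    · -- cycle avoiding the new vertex
      obtain ⟨x', w', hw', he⟩ := lift_cycle w hw hn
      have hcount : ∀ s : Bool,
          (List.filter (fun e => c' e = s) w.edges).length =
          (List.filter (fun e => c e = s) w'.edges).length := by
        intro s
        rw [← List.countP_eq_length_filter, ← List.countP_eq_length_filter, he,
          List.countP_map]
        exact List.countP_congr (fun e _ => by simp [Function.comp, hcmap])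
      rcases hcyc w' hw' with h | h | ⟨h1, h2⟩
      · left
        intro e hee
        rw [he, List.mem_map] at hee
        obtain ⟨e', he', rfl⟩ := hee
        rw [hcmap]
        exact h e' he'
      · right; left
        intro e hee
        rw [he, List.mem_map] at hee
        obtain ⟨e', he', rfl⟩ := hee
        rw [hcmap]
        exact h e' he'
      · right; right
        rw [hcount true, hcount false]
        exact ⟨h1, h2⟩
    · -- cycle through the new vertex
      obtain ⟨w₁, hw₁, hperm⟩ : ∃ w₁ : (subdivideEdge G a b).Walk none none,
          w₁.IsCycle ∧ w₁.edges.Perm w.edges :=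
        ⟨w.rotate none hn, hw.rotate hn, (w.rotate_edges none hn).perm⟩
      clear hn hw
      cases w₁ with
      | nil => exact absurd rfl hw₁.ne_nil
      | @cons _ y _ h p =>
        have hy : y = some a ∨ y = some b := by
          rcases subAdj_cases h with ⟨u, vv, hxx, -, -, -⟩ | ⟨-, hy⟩ | ⟨hyn, -⟩
          · exact absurd hxx (by simp)
          · exact hy
          · exact absurd hyn h.ne'
        have hsup : p.support.Nodup := by
          have := hw₁.support_nodup
          rwa [SimpleGraph.Walk.support_cons, List.tail_cons] at this
        have htr := hw₁.edges_nodup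
        rw [SimpleGraph.Walk.edges_cons] at htr
        have hpe_nodup : p.edges.Nodup := (List.nodup_cons.mp htr).2
        have hny_not : s(none, y) ∉ p.edges := (List.nodup_cons.mp htr).1
        obtain ⟨z, h2, q, hq⟩ := walk_decomp (show (none : Option V) ≠ y from h.ne) p.reverse
        have hz : z = some a ∨ z = some b := by
          rcases subAdj_cases h2 with ⟨u, vv, hxx, -, -, -⟩ | ⟨-, hz⟩ | ⟨hzn, -⟩
          · exact absurd hxx (by simp)
          · exact hz
          · exact absurd hzn h2.ne'
        have hrev_sup : p.support.reverse = none :: q.support := by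
          rw [← SimpleGraph.Walk.support_reverse, hq, SimpleGraph.Walk.support_cons]
        have hq_cons_nodup : ((none : Option V) :: q.support).Nodup := by
          rw [← hrev_sup]
          exact List.nodup_reverse.mpr hsup
        have hq_nonesup : (none : Option V) ∉ q.support := (List.nodup_cons.mp hq_cons_nodup).1
        have hq_supnodup : q.support.Nodup := (List.nodup_cons.mp hq_cons_nodup).2
        have hpe : p.edges = (s(none, z) :: q.edges).reverse := by
          have h5 := SimpleGraph.Walk.edges_reverse p
          rw [hq, SimpleGraph.Walk.edges_cons] at h5
          rw [h5, List.reverse_reverse]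
        have hperm2 : (SimpleGraph.Walk.cons h p).edges.Perm
            (s(none, y) :: s(none, z) :: q.edges) := by
          rw [SimpleGraph.Walk.edges_cons, hpe]
          exact List.Perm.cons _ (List.reverse_perm _)
        have hmem : s(none, z) ∈ p.edges := by rw [hpe]; simp
        have hyz : y ≠ z := by
          rintro rfl
          exact hny_not hmem
        obtain ⟨y', z', rfl, rfl, hy'z', hadj'⟩ :
            ∃ y' z', y = some y' ∧ z = some z' ∧ s(y', z') = s(a, b) ∧ G.Adj y' z' := by
          rcases hy with rfl | rfl <;> rcases hz with rfl | rfl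
          · exact absurd rfl hyz
          · exact ⟨a, b, rfl, rfl, rfl, hab⟩
          · exact ⟨b, a, rfl, rfl, Sym2.eq_swap, hab.symm⟩
          · exact absurd rfl hyz
        obtain ⟨z₀, y₀, q', hz0, hy0, hqs, hqe, hqne⟩ := lift_walk q hq_nonesup
        obtain rfl : z' = z₀ := Option.some_inj.mp hz0
        obtain rfl : y' = y₀ := Option.some_inj.mp hy0
        have hq'_sup : q'.support.Nodup := List.Nodup.of_map some (hqs ▸ hq_supnodup)
        have hq_edges_nodup : q.edges.Nodup := by
          have h6 := hpe_nodup
          rw [hpe, List.nodup_reverse, List.nodup_cons] at h6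
          exact h6.2
        have hq'_edges : q'.edges.Nodup := by
          rw [hqe] at hq_edges_nodup
          exact hq_edges_nodup.of_map _
        have hw₂ : (SimpleGraph.Walk.cons hadj' q').IsCycle := by
          rw [SimpleGraph.Walk.isCycle_def]
          refine ⟨⟨?_⟩, by simp, ?_⟩
          · rw [SimpleGraph.Walk.edges_cons, List.nodup_cons]
            exact ⟨fun hmem2 => hqne _ hmem2 hy'z', hq'_edges⟩
          · rw [SimpleGraph.Walk.support_cons, List.tail_cons]
            exact hq'_sup
        have hWL : w.edges.Perm (s(none, some y') :: s(none, some z') :: q.edges) :=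
          hperm.symm.trans hperm2
        rcases hcyc _ hw₂ with hmono | hmono | ⟨h1, h2⟩
        · left
          have hcab : c s(a, b) = true := by
            have := hmono s(y', z')
              (by rw [SimpleGraph.Walk.edges_cons]; exact List.mem_cons_self)
            rwa [hy'z'] at this
          intro e hee
          have hee' := hWL.mem_iff.mp hee
          rw [List.mem_cons, List.mem_cons] at hee'
          rcases hee' with rfl | rfl | hee'
          · rw [hcnone]; exact hcab
          · rw [hcnone]; exact hcab
          · rw [hqe, List.mem_map] at hee'
            obtain ⟨e', he', rfl⟩ := hee'
            rw [hcmap]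
            exact hmono e' (by rw [SimpleGraph.Walk.edges_cons]; exact List.mem_cons_of_mem _ he')
        · right; left
          have hcab : c s(a, b) = false := by
            have := hmono s(y', z')
              (by rw [SimpleGraph.Walk.edges_cons]; exact List.mem_cons_self)
            rwa [hy'z'] at this
          intro e hee
          have hee' := hWL.mem_iff.mp hee
          rw [List.mem_cons, List.mem_cons] at hee'
          rcases hee' with rfl | rfl | hee'
          · rw [hcnone]; exact hcab
          · rw [hcnone]; exact hcab
          · rw [hqe, List.mem_map] at hee'
            obtain ⟨e', he', rfl⟩ := hee'
            rw [hcmap]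
            exact hmono e' (by rw [SimpleGraph.Walk.edges_cons]; exact List.mem_cons_of_mem _ he')
        · right; right
          have key : ∀ s : Bool,
              2 ≤ (List.filter (fun e => c e = s) (SimpleGraph.Walk.cons hadj' q').edges).length →
              2 ≤ (List.filter (fun e => c' e = s) w.edges).length := by
            intro s hs
            rw [← List.countP_eq_length_filter] at hs ⊢
            rw [hWL.countP_eq, List.countP_cons, List.countP_cons, hqe, List.countP_map]
            have hq'count : List.countP ((fun e => decide (c' e = s)) ∘ Sym2.map some) q'.edges
                = List.countP (fun e => decide (c e = s)) q'.edges :=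
              List.countP_congr (fun e _ => by simp [Function.comp, hcmap])
            rw [hq'count]
            rw [SimpleGraph.Walk.edges_cons, List.countP_cons, hy'z'] at hs
            simp only [hcnone]
            by_cases hcab : c s(a, b) = s
            · have hif : (if (decide (c s(a, b) = s)) = true then 1 else 0) = 1 := by
                simp [hcab]
              rw [hif] at hs ⊢
              omega
            · have hif : (if (decide (c s(a, b) = s)) = true then 1 else 0) = 0 := by
                simp [hcab]
              rw [hif] at hs ⊢
              omega
          exact ⟨key true h1, key false h2⟩
end

section
/- If a connected graph G has a stable separating set, then G admits a NAC-coloring. -/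
open SimpleGraph

-- two distinct edges at a vertex of a cycle
lemma head_edge_mem {V : Type*} {G : SimpleGraph V} {u v : V} (p : G.Walk u v)
    (hp : p.edges ≠ []) : u ∈ p.edges.head hp := by
  cases p with
  | nil => simp at hp
  | cons h q => simp [Sym2.mem_iff]

lemma two_le_filter {α : Type*} {l : List α} (hl : l.Nodup) {a b : α} (ha : a ∈ l)
    (hb : b ∈ l) (hab : a ≠ b) {p : α → Bool} (hpa : p a = true) (hpb : p b = true) :
    2 ≤ (l.filter p).length := by
  classical
  have hnd : (l.filter p).Nodup := hl.filter p
  have ha' : a ∈ l.filter p := List.mem_filter.mpr ⟨ha, hpa⟩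
  have hb' : b ∈ l.filter p := List.mem_filter.mpr ⟨hb, hpb⟩
  have hsub : ({a, b} : Finset α) ⊆ (l.filter p).toFinset := by
    intro x hx
    simp only [Finset.mem_insert, Finset.mem_singleton] at hx
    rcases hx with rfl | rfl <;> rw [List.mem_toFinset] <;> assumption
  have := Finset.card_le_card hsub
  rwa [Finset.card_insert_of_notMem (by simpa), Finset.card_singleton,
    List.toFinset_card_of_nodup hnd] at this

lemma last_edge_mem {V : Type*} {G : SimpleGraph V} {u v : V} (p : G.Walk u v)
    (hp : p.edges ≠ []) : v ∈ p.edges.getLast hp := by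
  induction p with
  | nil => simp at hp
  | cons h q ih =>
    cases q with
    | nil => simp [Sym2.mem_iff]
    | cons h' q' =>
      have h2 : (SimpleGraph.Walk.cons h' q').edges ≠ [] := by simp
      rw [show (SimpleGraph.Walk.cons h (SimpleGraph.Walk.cons h' q')).edges.getLast hp
          = (SimpleGraph.Walk.cons h' q').edges.getLast h2 from List.getLast_cons h2]
      exact ih h2

lemma head_ne_getLast {α : Type*} {l : List α} (h : l.Nodup) (hl : l ≠ [])
    (h2 : 2 ≤ l.length) : l.head hl ≠ l.getLast hl := by
  cases l with
  | nil => simp at hl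
  | cons a t =>
    have ht : t ≠ [] := by
      intro h'; subst h'; simp at h2
    rw [List.head_cons, List.getLast_cons ht]
    intro heq
    exact (List.nodup_cons.mp h).1 (heq ▸ List.getLast_mem ht)

lemma cycle_two_edges_at {V : Type*} [DecidableEq V] {G : SimpleGraph V} {u v : V} {w : G.Walk v v}
    (hw : w.IsCycle) (hu : u ∈ w.support) :
    ∃ e₁ ∈ w.edges, ∃ e₂ ∈ w.edges, e₁ ≠ e₂ ∧ u ∈ e₁ ∧ u ∈ e₂ := by
  have hrot := hw.rotate hu
  have hperm : (w.rotate u hu).edges ~r w.edges := w.rotate_edges u hu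
  suffices h : ∃ e₁ ∈ (w.rotate u hu).edges, ∃ e₂ ∈ (w.rotate u hu).edges,
      e₁ ≠ e₂ ∧ u ∈ e₁ ∧ u ∈ e₂ by
    obtain ⟨e₁, h1, e₂, h2, hne, hu1, hu2⟩ := h
    exact ⟨e₁, hperm.mem_iff.mp h1, e₂, hperm.mem_iff.mp h2, hne, hu1, hu2⟩
  set cw := w.rotate u hu with hcw
  have hlen : 3 ≤ cw.length := hrot.three_le_length
  have hne : cw.edges ≠ [] := by
    intro h
    have := cw.length_edges
    rw [h] at this
    simp at this
    omega
  have hner : cw.reverse.edges ≠ [] := by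
    rw [Walk.edges_reverse]
    simpa using hne
  have hnd : cw.edges.Nodup := hrot.isTrail.edges_nodup
  have hL : 2 ≤ cw.edges.length := by rw [cw.length_edges]; omega
  refine ⟨cw.edges.head hne, List.head_mem hne, cw.edges.getLast hne, List.getLast_mem hne,
    head_ne_getLast hnd hne hL, head_edge_mem cw hne, last_edge_mem cw hne⟩

lemma mem_support_of_mem_edges'' {V : Type*} {G : SimpleGraph V} {u v a : V}
    {p : G.Walk u v} {e : Sym2 V} (he : e ∈ p.edges) (ha : a ∈ e) : a ∈ p.support := by
  obtain ⟨b, rfl⟩ := Sym2.mem_iff_exists.mp ha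
  exact p.fst_mem_support_of_mem_edges he

/-- If a connected graph has a stable separating set (an independent set of
vertices whose removal disconnects the graph), then it admits a NAC-coloring. -/
theorem nac_of_stable_separating_set {V : Type*} (G : SimpleGraph V)
    (hconn : G.Connected) (S : Set V)
    (hstable : ∀ u ∈ S, ∀ v ∈ S, ¬ G.Adj u v)
    (hsep : ∃ x y : (Sᶜ : Set V), ¬ (G.induce (Sᶜ : Set V)).Reachable x y) :
    ∃ c : Sym2 V → Bool, IsNACColoring G c := by
  classical
  obtain ⟨x, y, hxy⟩ := hsep
  set A : Set V :=
    {v : V | ∃ h : v ∈ (Sᶜ : Set V), (G.induce (Sᶜ : Set V)).Reachable x ⟨v, h⟩} with hA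
  set c : Sym2 V → Bool := fun e => decide (∃ v ∈ e, v ∈ A) with hc
  have hxA : (x : V) ∈ A := ⟨x.2, SimpleGraph.Reachable.refl x⟩
  have hyA : (y : V) ∉ A := by
    rintro ⟨h, hr⟩
    exact hxy hr
  have extend : ∀ u v : V, u ∈ A → G.Adj u v → v ∉ S → v ∈ A := by
    rintro u v ⟨hu, hru⟩ hadj hvS
    exact ⟨hvS, hru.trans (SimpleGraph.Adj.reachable (by exact hadj))⟩
  have redAt : ∀ a : V, a ∈ A → ∀ e : Sym2 V, a ∈ e → c e = true := by
    intro a haA e hae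
    simp only [hc, decide_eq_true_iff]
    exact ⟨a, hae, haA⟩
  have blueAt : ∀ a : V, a ∉ S → a ∉ A → ∀ e ∈ G.edgeSet, a ∈ e → c e = false := by
    intro a haS haA e he hae
    simp only [hc, decide_eq_false_iff_not]
    rintro ⟨v, hv, hvA⟩
    by_cases hva : v = a
    · exact haA (hva ▸ hvA)
    · have hedge : e = s(a, v) := (Sym2.mem_and_mem_iff (fun h => hva h.symm)).mp ⟨hae, hv⟩
      have hadj : G.Adj a v := by rw [hedge, SimpleGraph.mem_edgeSet] at he; exact he
      exact haA (extend v a hvA hadj.symm haS)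
  have nbr : ∀ u v : V, u ≠ v → ∃ w, G.Adj u w := by
    intro u v huv
    obtain ⟨p⟩ := hconn u v
    cases p with
    | nil => exact absurd rfl huv
    | cons h q => exact ⟨_, h⟩
  have hxyV : (x : V) ≠ (y : V) := by
    intro h
    exact hxy (Subtype.ext h ▸ SimpleGraph.Reachable.refl x)
  obtain ⟨bx, hbx⟩ := nbr x y hxyV
  obtain ⟨by', hby⟩ := nbr y x hxyV.symm
  refine ⟨c, ⟨s((x : V), bx), hbx, redAt x hxA _ (Sym2.mem_mk_left _ _)⟩,
    ⟨s((y : V), by'), hby, blueAt y y.2 hyA _ hby (Sym2.mem_mk_left _ _)⟩, ?_⟩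
  intro v w hw
  by_cases hAllR : ∀ e ∈ w.edges, c e = true
  · exact Or.inl hAllR
  by_cases hAllB : ∀ e ∈ w.edges, c e = false
  · exact Or.inr (Or.inl hAllB)
  push_neg at hAllR hAllB
  obtain ⟨eb, hebm, hebc⟩ := hAllR
  obtain ⟨er, herm, herc⟩ := hAllB
  replace hebc : c eb = false := by simpa using hebc
  replace herc : c er = true := by simpa using herc
  have hnd := hw.isTrail.edges_nodup
  refine Or.inr (Or.inr ⟨?_, ?_⟩)
  · -- at least two red edges
    obtain ⟨a, hae, haA⟩ : ∃ a ∈ er, a ∈ A := by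
      have := herc
      rw [hc, decide_eq_true_iff] at this
      exact this
    have hasup : a ∈ w.support := mem_support_of_mem_edges'' herm hae
    obtain ⟨e₁, h1, e₂, h2, hne, ha1, ha2⟩ := cycle_two_edges_at hw hasup
    exact two_le_filter hnd h1 h2 hne (by simp [redAt a haA e₁ ha1])
      (by simp [redAt a haA e₂ ha2])
  · -- at least two blue edges
    have hbA : ∀ v ∈ eb, v ∉ A := by
      have := hebc
      rw [hc, decide_eq_false_iff_not] at this
      push_neg at this
      exact this
    obtain ⟨⟨a, b⟩, rfl⟩ := eb.exists_rep
    have hab : G.Adj a b := (SimpleGraph.Walk.edges_subset_edgeSet w hebm)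
    obtain ⟨u0, hu0e, hu0S⟩ : ∃ u0, u0 ∈ s(a, b) ∧ u0 ∉ S := by
      by_cases haS : a ∈ S
      · exact ⟨b, Sym2.mem_mk_right _ _, fun hbS => hstable a haS b hbS hab⟩
      · exact ⟨a, Sym2.mem_mk_left _ _, haS⟩
    have hu0A : u0 ∉ A := hbA u0 hu0e
    have hu0sup : u0 ∈ w.support := mem_support_of_mem_edges'' hebm hu0e
    obtain ⟨e₁, h1, e₂, h2, hne, hb1, hb2⟩ := cycle_two_edges_at hw hu0sup
    exact two_le_filter hnd h1 h2 hne
      (by simp [blueAt u0 hu0S hu0A e₁ (SimpleGraph.Walk.edges_subset_edgeSet w h1) hb1])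
      (by simp [blueAt u0 hu0S hu0A e₂ (SimpleGraph.Walk.edges_subset_edgeSet w h2) hb2])
end
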